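/- Let X = {x_1, …, x_n} with assigned positive integer degrees, and let GPerm⟨X⟩ = k⟨X⟩/(R) where R consists of all elements x_i x_j x_k − x_i x_k x_j. Then as a graded vector space, GPerm⟨X⟩ ≅ k ⊕ ⊕_{i=1}^n x_i · k[x_1,…,x_n], and its Hilbert series equals 1 + (Σ_{i=1}^n t^{deg x_i}) / (Π_{i=1}^n (1 − t^{deg x_i})). -/

import Mathlib

namespace Stmt10Aux

variable {n : ℕ}

/-- Normal forms of nonempty words: first letter plus multiset of the rest. -/
@[ext]
structure T (n : ℕ) where
  i : Fin n
  f : Fin n →₀ ℕ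

noncomputable instance : Mul (T n) := ⟨fun a b => ⟨a.i, a.f + Finsupp.single b.i 1 + b.f⟩⟩

lemma mul_def (a b : T n) : a * b = ⟨a.i, a.f + Finsupp.single b.i 1 + b.f⟩ := rfl

noncomputable instance : Semigroup (T n) where
  mul_assoc a b c := by
    simp only [mul_def, T.mk.injEq]
    exact ⟨trivial, by abel⟩

abbrev G (n : ℕ) := WithOne (T n)

def η (i : Fin n) : G n := (⟨i, 0⟩ : T n)

noncomputable def ν (l : List (Fin n)) : G n := (l.map η).prod

@[simp] lemma ν_nil : ν ([] : List (Fin n)) = 1 := rfl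

@[simp] lemma ν_cons' (i : Fin n) (t : List (Fin n)) : ν (i :: t) = η i * ν t := by
  simp [ν]

lemma ν_cons (i : Fin n) (t : List (Fin n)) :
    ν (i :: t) = ((⟨i, Multiset.toFinsupp (↑t)⟩ : T n) : G n) := by
  induction t generalizing i with
  | nil => simp [η]
  | cons j t ih =>
    rw [ν_cons', ih, η, ← WithOne.coe_mul]
    congr 1
    simp only [mul_def, T.mk.injEq]
    refine ⟨trivial, ?_⟩
    rw [← Multiset.cons_coe, ← Multiset.singleton_add, map_add,
      Multiset.toFinsupp_singleton]
    simp

abbrev P (n : ℕ) := Fin n × (Fin n →₀ ℕ)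

variable (d : Fin n → ℕ)

/-- degree of a normal-form word -/
def deg (p : P n) : ℕ := d p.1 + p.2.sum fun j e => e * d j

def wdeg : Option (P n) → ℕ
  | none => 0
  | some p => deg d p

/-- the list representing a normal form -/
noncomputable def Lopt : Option (P n) → List (Fin n)
  | none => []
  | some p => p.1 :: (Finsupp.toMultiset p.2).toList

/-- normal form of a word -/
noncomputable def ind : List (Fin n) → Option (P n)
  | [] => none
  | (i :: t) => some (i, Multiset.toFinsupp (↑t))

noncomputable def νL (x : Option (P n)) : G n := ν (Lopt x)

@[simp] lemma νL_none : νL (none : Option (P n)) = 1 := rfl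

@[simp] lemma νL_some (p : P n) : νL (some p) = ((⟨p.1, p.2⟩ : T n) : G n) := by
  rw [νL, Lopt, ν_cons, Multiset.coe_toList, Finsupp.toMultiset_toFinsupp]

lemma νL_inj : Function.Injective (νL (n := n)) := by
  intro x y h
  match x, y with
  | none, none => rfl
  | none, some p => simp at h
  | some p, none => simp at h
  | some p, some q =>
    simp only [νL_some] at h
    rw [WithOne.coe_inj] at h
    obtain ⟨h1, h2⟩ := T.mk.injEq _ _ _ _ ▸ h
    · exact congrArg some (Prod.ext h1 h2)

lemma degm (s : Multiset (Fin n)) :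
    (s.map d).sum = (Multiset.toFinsupp s).sum fun j e => e * d j := by
  induction s using Multiset.induction with
  | empty => simp
  | cons a s ih =>
    rw [Multiset.map_cons, Multiset.sum_cons, ih, ← Multiset.singleton_add, map_add,
      Multiset.toFinsupp_singleton,
      Finsupp.sum_add_index' (fun j => by simp) (fun j e1 e2 => add_mul e1 e2 (d j)),
      Finsupp.sum_single_index (by simp)]
    simp

lemma deg_list (l : List (Fin n)) : (l.map d).sum = wdeg d (ind l) := by
  cases l with
  | nil => rfl
  | cons i t =>
    rw [List.map_cons, List.sum_cons, ind, wdeg, deg]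
    congr 1
    rw [← Multiset.sum_coe, ← Multiset.map_coe, degm]

lemma deg_Lopt (x : Option (P n)) : ((Lopt x).map d).sum = wdeg d x := by
  cases x with
  | none => rfl
  | some p =>
    rw [Lopt, List.map_cons, List.sum_cons, wdeg, deg]
    congr 1
    rw [← Multiset.sum_coe, ← Multiset.map_coe, Multiset.coe_toList, degm,
      Finsupp.toMultiset_toFinsupp]

variable (k : Type*) [Field k]

abbrev M (k : Type*) [Field k] (n : ℕ) := MonoidAlgebra k (G n)

noncomputable def φ : FreeAlgebra k (Fin n) →ₐ[k] M k n :=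
  FreeAlgebra.lift k (fun i => MonoidAlgebra.of k (G n) (η i))

@[simp] lemma φ_ι (i : Fin n) : φ k (FreeAlgebra.ι k i) = MonoidAlgebra.of k (G n) (η i) :=
  FreeAlgebra.lift_ι_apply _ _

lemma φ_word (l : List (Fin n)) :
    φ k ((l.map (FreeAlgebra.ι k)).prod) = MonoidAlgebra.of k (G n) (ν l) := by
  rw [map_list_prod, ν, map_list_prod, List.map_map, List.map_map]
  simp [Function.comp_def]

lemma rel_ker (i j l : Fin n) :
    φ k (FreeAlgebra.ι k i * FreeAlgebra.ι k j * FreeAlgebra.ι k l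
      - FreeAlgebra.ι k i * FreeAlgebra.ι k l * FreeAlgebra.ι k j) = 0 := by
  rw [map_sub, map_mul, map_mul, map_mul, map_mul, φ_ι, φ_ι, φ_ι, sub_eq_zero,
    ← map_mul, ← map_mul, ← map_mul, ← map_mul]
  congr 1
  simp only [η, ← WithOne.coe_mul, WithOne.coe_inj, mul_def, T.mk.injEq]
  exact ⟨trivial, by abel⟩

lemma span_le_ker (z : FreeAlgebra k (Fin n))
    (hz : z ∈ TwoSidedIdeal.span
      {w | ∃ i j l : Fin n,
        w = FreeAlgebra.ι k i * FreeAlgebra.ι k j * FreeAlgebra.ι k l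
          - FreeAlgebra.ι k i * FreeAlgebra.ι k l * FreeAlgebra.ι k j}) :
    φ k z = 0 := by
  have := TwoSidedIdeal.mem_span_iff.mp hz (TwoSidedIdeal.ker (φ (n := n) k)) ?_
  · rwa [TwoSidedIdeal.mem_ker] at this
  · rintro w ⟨i, j, l, rfl⟩
    rw [SetLike.mem_coe, TwoSidedIdeal.mem_ker]
    exact rel_ker k i j l

lemma of_linearIndependent :
    LinearIndependent k (fun g : G n => (MonoidAlgebra.of k (G n) g : M k n)) := by
  have := (MonoidAlgebra.basis (G n) k).linearIndependent
  convert this using 1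
  funext g
  rw [MonoidAlgebra.basis_apply]
  rfl

end Stmt10Aux

open Stmt10Aux

/-- The free connected GPerm algebra `GPerm⟨X⟩ = k⟨X⟩/(x_i x_j x_l - x_i x_l x_j)`
on generators `x_1, …, x_n` of positive degrees `d i`:
as a graded vector space it is `k ⊕ ⊕_{i=1}^n x_i·k[x_1,…,x_n]`.  Concretely,
for any presentation `π : k⟨X⟩ → Q` with kernel the two-sided ideal of the
relations, and `W m` the span of the images of the words of total degree `m`,
the `W m` are independent and span `Q`, `dim W 0 = 1`, and for `m ≥ 1`
`dim W m = #{(i, f) : d i + Σ_j f j · d j = m}`, which is exactly the claim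
that the Hilbert series is `1 + (Σ_i t^{d i}) / (Π_i (1 - t^{d i}))`. -/
theorem stmt10 {k : Type*} [Field k] {n : ℕ} (d : Fin n → ℕ) (hd : ∀ i, 1 ≤ d i)
    (Q : Type*) [Ring Q] [Algebra k Q] (π : FreeAlgebra k (Fin n) →ₐ[k] Q)
    (hsurj : Function.Surjective π)
    (hker : ∀ z : FreeAlgebra k (Fin n), π z = 0 ↔ z ∈ TwoSidedIdeal.span
      {w | ∃ i j l : Fin n,
        w = FreeAlgebra.ι k i * FreeAlgebra.ι k j * FreeAlgebra.ι k l
          - FreeAlgebra.ι k i * FreeAlgebra.ι k l * FreeAlgebra.ι k j})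
    (W : ℕ → Submodule k Q)
    (hW : ∀ m, W m = Submodule.span k
      {q | ∃ l : List (Fin n), (l.map d).sum = m ∧
        q = (l.map (fun i => π (FreeAlgebra.ι k i))).prod}) :
    Module.finrank k (W 0) = 1 ∧
    (∀ m, 1 ≤ m → Module.finrank k (W m)
      = Nat.card {p : Fin n × (Fin n →₀ ℕ) //
          d p.1 + (p.2.sum fun j e => e * d j) = m}) ∧
    iSup W = ⊤ ∧ iSupIndep W := by
  classical
  set w : List (Fin n) → FreeAlgebra k (Fin n) := fun l => (l.map (FreeAlgebra.ι k)).prod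
    with hw
  have hwapp : ∀ l₁ l₂, w (l₁ ++ l₂) = w l₁ * w l₂ := by
    intro l₁ l₂; simp [hw]
  have hq : ∀ l : List (Fin n),
      (l.map fun i => π (FreeAlgebra.ι k i)).prod = π (w l) := by
    intro l; rw [hw]; simp only [map_list_prod, List.map_map]; rfl
  have key_perm : ∀ (t₁ t₂ : List (Fin n)), t₁.Perm t₂ →
      ∀ i, π (w (i :: t₁)) = π (w (i :: t₂)) := by
    intro t₁ t₂ h
    induction h with
    | nil => intro i; rfl
    | cons a _ ih =>
      intro i
      have h1 : ∀ s : List (Fin n), w (i :: a :: s)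
          = FreeAlgebra.ι k i * w (a :: s) := by
        intro s; simp [hw]
      rw [h1, h1, map_mul, map_mul, ih a]
    | swap a b t =>
      intro i
      rw [← sub_eq_zero, ← map_sub, hker]
      have hide : w (i :: b :: a :: t) - w (i :: a :: b :: t)
          = (FreeAlgebra.ι k i * FreeAlgebra.ι k b * FreeAlgebra.ι k a
            - FreeAlgebra.ι k i * FreeAlgebra.ι k a * FreeAlgebra.ι k b) * w t := by
        simp only [hw, List.map_cons, List.prod_cons]
        noncomm_ring
      rw [hide]
      exact TwoSidedIdeal.mul_mem_right _ _ _
        (TwoSidedIdeal.subset_span ⟨i, b, a, rfl⟩)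
    | trans _ _ ih1 ih2 => intro i; exact (ih1 i).trans (ih2 i)
  set b : Option (P n) → Q := fun x => π (w (Lopt x)) with hb_def
  have hπw : ∀ l, π (w l) = b (ind l) := by
    intro l
    cases l with
    | nil => rfl
    | cons i t =>
      have hp : t.Perm ((Finsupp.toMultiset
          (Multiset.toFinsupp (↑t : Multiset (Fin n)))).toList) := by
        rw [← Multiset.coe_eq_coe, Multiset.coe_toList]
        exact (Multiset.toFinsupp_toMultiset _).symm
      have := key_perm t _ hp i
      simpa [hb_def, ind, Lopt] using this
  have hWb : ∀ m, W m = Submodule.span k (b '' {x | wdeg d x = m}) := by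
    intro m
    rw [hW m]
    apply le_antisymm
    · rw [Submodule.span_le]
      rintro q ⟨l, hl, rfl⟩
      apply Submodule.subset_span
      exact ⟨ind l, (deg_list d l).symm.trans hl, ((hq l).trans (hπw l)).symm⟩
    · rw [Submodule.span_le]
      rintro q ⟨x, hx, rfl⟩
      apply Submodule.subset_span
      exact ⟨Lopt x, (deg_Lopt d x).trans hx, (hq (Lopt x)).symm⟩
  have hbI : LinearIndependent k b := by
    rw [linearIndependent_iff]
    intro c hc
    have h1 : π (c.sum fun x a => a • w (Lopt x)) = 0 := by
      rw [map_finsuppSum]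
      rw [Finsupp.linearCombination_apply] at hc
      simpa [map_smul, hb_def] using hc
    have h2 := span_le_ker k _ ((hker _).mp h1)
    rw [map_finsuppSum] at h2
    simp only [hw, map_smul, φ_word] at h2
    have h3 := (of_linearIndependent (n := n) k).comp νL νL_inj
    rw [linearIndependent_iff] at h3
    refine h3 c ?_
    rw [Finsupp.linearCombination_apply]
    exact h2
  have hmulmem : ∀ x y : Option (P n), b x * b y ∈ Set.range b := by
    intro x y
    have h1 : b x * b y = π (w (Lopt x ++ Lopt y)) := by
      rw [hwapp, map_mul]
    rw [h1, hπw]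
    exact ⟨_, rfl⟩
  have hone : (1 : Q) = b none := by simp [hb_def, Lopt, hw]
  have hspan : Submodule.span k (Set.range b) = ⊤ := by
    have hall : ∀ z : FreeAlgebra k (Fin n), π z ∈ Submodule.span k (Set.range b) := by
      intro z
      induction z using FreeAlgebra.induction with
      | grade0 r =>
        rw [AlgHom.commutes, Algebra.algebraMap_eq_smul_one, hone]
        exact Submodule.smul_mem _ _ (Submodule.subset_span ⟨none, rfl⟩)
      | grade1 i =>
        have : π (FreeAlgebra.ι k i) = b (ind [i]) := by
          rw [← hπw]; congr 1; simp [hw]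
        rw [this]; exact Submodule.subset_span ⟨_, rfl⟩
      | mul z1 z2 h1 h2 =>
        rw [map_mul]
        have hm := Submodule.mul_mem_mul h1 h2
        rw [Submodule.span_mul_span] at hm
        refine Submodule.span_mono ?_ hm
        rintro _ ⟨u, ⟨x, rfl⟩, v, ⟨y, rfl⟩, rfl⟩
        exact hmulmem x y
      | add z1 z2 h1 h2 =>
        rw [map_add]; exact Submodule.add_mem _ h1 h2
    rw [eq_top_iff]
    intro q _
    obtain ⟨z, rfl⟩ := hsurj q
    exact hall z
  have hmemW : ∀ x, b x ∈ W (wdeg d x) := fun x => by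
    rw [hWb]; exact Submodule.subset_span ⟨x, rfl, rfl⟩
  have hsup : iSup W = ⊤ := by
    rw [eq_top_iff, ← hspan, Submodule.span_le]
    rintro q ⟨x, rfl⟩
    exact Submodule.mem_iSup_of_mem _ (hmemW x)
  -- rank of W 0
  have hX0 : {x : Option (P n) | wdeg d x = 0} = {none} := by
    ext x
    cases x with
    | none => simp [wdeg]
    | some p =>
      simp only [Set.mem_setOf_eq, Set.mem_singleton_iff, wdeg, deg]
      have := hd p.1
      constructor
      · intro h; omega
      · intro h; exact absurd h (by simp)
  have h10 : Module.finrank k (W 0) = 1 := by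
    rw [hWb 0, hX0, Set.image_singleton]
    exact finrank_span_singleton (hbI.ne_zero none)
  -- rank of W m
  have hfle : ∀ (f : Fin n →₀ ℕ) (j : Fin n), f j ≤ f.sum fun j e => e * d j := by
    intro f j
    by_cases h : f j = 0
    · simp [h]
    · calc f j ≤ f j * d j := Nat.le_mul_of_pos_right _ (hd j)
        _ ≤ f.sum fun j e => e * d j :=
          Finset.single_le_sum (f := fun i => f i * d i) (fun i _ => Nat.zero_le _)
            (Finsupp.mem_support_iff.mpr h)
  have hrank : ∀ m, 1 ≤ m → Module.finrank k (W m)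
      = Nat.card {p : Fin n × (Fin n →₀ ℕ) //
          d p.1 + (p.2.sum fun j e => e * d j) = m} := by
    intro m hm
    haveI : Finite {p : Fin n × (Fin n →₀ ℕ) //
        d p.1 + (p.2.sum fun j e => e * d j) = m} := by
      refine Finite.of_injective
        (fun p => ((p.1.1, fun j => (⟨p.1.2 j, ?_⟩ : Fin (m+1))) :
          Fin n × (Fin n → Fin (m+1)))) ?_
      · have h1 := hfle p.1.2 j
        have h2 := p.2
        omega
      · intro p q h
        obtain ⟨h1, h2⟩ := Prod.mk.injEq _ _ _ _ ▸ h
        refine Subtype.ext (Prod.ext h1 (Finsupp.ext fun j => ?_))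
        have := congrFun h2 j
        simpa using congrArg Fin.val this
    haveI := Fintype.ofFinite {p : Fin n × (Fin n →₀ ℕ) //
        d p.1 + (p.2.sum fun j e => e * d j) = m}
    have hXm : b '' {x | wdeg d x = m} = Set.range
        (b ∘ fun p : {p : Fin n × (Fin n →₀ ℕ) //
          d p.1 + (p.2.sum fun j e => e * d j) = m} => some p.1) := by
      ext q
      constructor
      · rintro ⟨x, hx, rfl⟩
        cases x with
        | none => simp [wdeg] at hx; omega
        | some p => exact ⟨⟨p, hx⟩, rfl⟩
      · rintro ⟨p, rfl⟩
        exact ⟨some p.1, p.2, rfl⟩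
    rw [hWb m, hXm, finrank_span_eq_card
      (hbI.comp _ (fun p q h => Subtype.ext (Option.some_injective _ h))),
      Nat.card_eq_fintype_card]
  -- independence
  have hBtop : ⊤ ≤ Submodule.span k (Set.range b) := hspan.ge
  let B : Module.Basis (Option (P n)) k Q := Module.Basis.mk hbI hBtop
  have hBb : ∀ x, B x = b x := Module.Basis.mk_apply hbI hBtop
  have hWmap : ∀ m, Submodule.map (B.repr : Q →ₗ[k] (Option (P n) →₀ k)) (W m)
      ≤ Finsupp.supported k k {x | wdeg d x = m} := by
    intro m
    rw [hWb m, Submodule.map_span, Submodule.span_le]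
    rintro _ ⟨_, ⟨x, hx, rfl⟩, rfl⟩
    have hx1 : (B.repr : Q →ₗ[k] (Option (P n) →₀ k)) (b x) = Finsupp.single x 1 := by
      rw [← hBb x]; simpa using B.repr_self x
    rw [hx1]
    exact Finsupp.single_mem_supported k 1 hx
  have hind : iSupIndep W := by
    rw [iSupIndep_def]
    intro m
    rw [Submodule.disjoint_def]
    intro x hx1 hx2
    have e1 : B.repr x ∈ Finsupp.supported k k {y | wdeg d y = m} :=
      hWmap m ⟨x, hx1, rfl⟩
    have e2 : B.repr x ∈ Finsupp.supported k k {y : Option (P n) | wdeg d y ≠ m} := by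
      have hx2' : B.repr x ∈ Submodule.map (B.repr : Q →ₗ[k] (Option (P n) →₀ k))
          (⨆ j, ⨆ _ : j ≠ m, W j) := ⟨x, hx2, rfl⟩
      rw [Submodule.map_iSup] at hx2'
      have hle : (⨆ j, Submodule.map (B.repr : Q →ₗ[k] (Option (P n) →₀ k))
          (⨆ _ : j ≠ m, W j)) ≤ Finsupp.supported k k {y | wdeg d y ≠ m} := by
        refine iSup_le fun j => ?_
        rw [Submodule.map_iSup]
        refine iSup_le fun hj => (hWmap j).trans (Finsupp.supported_mono ?_)
        intro y hy
        exact fun h => hj (hy.symm.trans h)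
      exact hle hx2'
    have hzero : B.repr x = 0 := by
      have hdisj : Disjoint (Finsupp.supported k k {y : Option (P n) | wdeg d y = m})
          (Finsupp.supported k k {y : Option (P n) | wdeg d y ≠ m}) :=
        Finsupp.disjoint_supported_supported
          (Set.disjoint_left.mpr fun y hy1 hy2 => hy2 hy1)
      exact Submodule.disjoint_def.mp hdisj _ e1 e2
    have := B.repr.map_eq_zero_iff.mp hzero
    exact this
  exact ⟨h10, hrank, hsup, hind⟩
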